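/- Let p be an odd prime and let F_{0,∞} ⊆ [0,1]² be the set of all pairs (x,y) for which there exist sequences (x_n)_{n≥1} and (y_n)_{n≥1} with values in {0,1,…,p−1} such that x = ∑_{n≥1} x_n·p^{−n}, y = ∑_{n≥1} y_n·p^{−n}, and x_n ≡ y_n (mod 2) for every n ≥ 1. Then the Hausdorff dimension of F_{0,∞} equals log((p²+1)/2)/log p. -/

import Mathlib

open Finset
open scoped ENNReal NNReal

namespace F0aux



/-- Reconstruction of a number from its base-`b` digits. -/
lemma rec_digits (b : ℕ) (hb : 0 < b) : ∀ (n i : ℕ), i < b ^ n →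
    ∑ k ∈ range n, (i / b ^ k % b) * b ^ k = i := by
  intro n
  induction n with
  | zero =>
    intro i hi
    simp only [pow_zero, Nat.lt_one_iff] at hi
    simp [hi]
  | succ n ih =>
    intro i hi
    rw [Finset.sum_range_succ']
    have h1 : ∀ k, i / b ^ (k + 1) = (i / b) / b ^ k := by
      intro k
      rw [pow_succ', Nat.div_div_eq_div_mul]
    have h2 : i / b < b ^ n := by
      rw [Nat.div_lt_iff_lt_mul hb, ← pow_succ]
      exact hi
    calc ∑ k ∈ range n, (i / b ^ (k + 1) % b) * b ^ (k + 1) + i / b ^ 0 % b * b ^ 0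
        = b * ∑ k ∈ range n, ((i / b) / b ^ k % b) * b ^ k + i % b := by
          rw [Finset.mul_sum]
          simp only [pow_zero, Nat.div_one, mul_one]
          congr 1
          refine Finset.sum_congr rfl fun k _ => ?_
          rw [h1, pow_succ']
          ring
      _ = i := by rw [ih _ h2]; exact Nat.div_add_mod i b

/-- Extracting digits from a base-`b` representation. -/
lemma digit_of_sum (b : ℕ) (hb : 0 < b) : ∀ (n : ℕ) (a : ℕ → ℕ), (∀ k < n, a k < b) →
    ∀ k0 < n, (∑ k ∈ range n, a k * b ^ k) / b ^ k0 % b = a k0 := by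
  intro n
  induction n with
  | zero => omega
  | succ n ih =>
    intro a ha k0 hk0
    rw [Finset.sum_range_succ']
    have hS : ∑ k ∈ range n, a (k + 1) * b ^ (k + 1) + a 0 * b ^ 0
        = a 0 + b * ∑ k ∈ range n, a (k + 1) * b ^ k := by
      rw [Finset.mul_sum]
      simp only [pow_zero, mul_one]
      rw [add_comm]
      congr 1
      refine Finset.sum_congr rfl fun k _ => ?_
      rw [pow_succ']; ring
    rw [hS]
    rcases Nat.eq_zero_or_pos k0 with rfl | hk0pos
    · simp only [pow_zero, Nat.div_one]
      rw [Nat.add_mul_mod_self_left]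
      exact Nat.mod_eq_of_lt (ha 0 (by omega))
    · obtain ⟨k1, rfl⟩ : ∃ k1, k0 = k1 + 1 := ⟨k0 - 1, by omega⟩
      have hdd : (a 0 + b * ∑ k ∈ range n, a (k + 1) * b ^ k) / b ^ (k1 + 1)
          = (∑ k ∈ range n, a (k + 1) * b ^ k) / b ^ k1 := by
        rw [pow_succ', ← Nat.div_div_eq_div_mul]
        congr 1
        rw [Nat.add_mul_div_left _ _ hb]
        have : a 0 / b = 0 := Nat.div_eq_of_lt (ha 0 (by omega))
        omega
      rw [hdd]
      exact ih (fun k => a (k + 1)) (fun k hk => ha (k + 1) (by omega)) k1 (by omega)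


/-- Number of even digits below `p`. -/
def Ep (p : ℕ) : ℕ := (p + 1) / 2
/-- Number of odd digits below `p`. -/
def Op (p : ℕ) : ℕ := p / 2
/-- `(p² + 1)/2`. -/
def Np (p : ℕ) : ℕ := (p * p + 1) / 2

/-- Enumeration of mod-2-congruent digit pairs. -/
def enc (p m : ℕ) : ℕ × ℕ :=
  if m < Ep p * Ep p then (2 * (m / Ep p), 2 * (m % Ep p))
  else (2 * ((m - Ep p * Ep p) / Op p) + 1, 2 * ((m - Ep p * Ep p) % Op p) + 1)

section
variable {p : ℕ} (hp3 : 3 ≤ p) (hpo : p % 2 = 1)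
set_option linter.unusedSectionVars false

include hp3 hpo

lemma hE : 2 * Ep p = p + 1 := by unfold Ep; omega
lemma hO : 2 * Op p + 1 = p := by unfold Op; omega
lemma Ep_pos : 0 < Ep p := by unfold Ep; omega
lemma Op_pos : 0 < Op p := by unfold Op; omega

lemma Np_eq : Np p = Ep p * Ep p + Op p * Op p := by
  have h1 : 2 * Ep p = p + 1 := hE hp3 hpo
  have h2 : 2 * Op p + 1 = p := hO hp3 hpo
  have key : 2 * (Ep p * Ep p + Op p * Op p) = p * p + 1 := by nlinarith
  unfold Np; omega

lemma enc_valid {m : ℕ} (hm : m < Np p) :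
    (enc p m).1 < p ∧ (enc p m).2 < p ∧ (enc p m).1 % 2 = (enc p m).2 % 2 := by
  have h1 : 2 * Ep p = p + 1 := hE hp3 hpo
  have h2 : 2 * Op p + 1 = p := hO hp3 hpo
  have hNp : Np p = Ep p * Ep p + Op p * Op p := Np_eq hp3 hpo
  unfold enc
  split_ifs with h
  · have ha : m / Ep p < Ep p := Nat.div_lt_of_lt_mul (by omega)
    have hb : m % Ep p < Ep p := Nat.mod_lt _ (by omega)
    refine ⟨by omega, by omega, by omega⟩
  · have hm' : m - Ep p * Ep p < Op p * Op p := by omega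
    have ha : (m - Ep p * Ep p) / Op p < Op p := Nat.div_lt_of_lt_mul (by omega)
    have hb : (m - Ep p * Ep p) % Op p < Op p := Nat.mod_lt _ (by omega)
    refine ⟨by omega, by omega, by omega⟩

lemma enc_inj {m m' : ℕ} (hm : m < Np p) (hm' : m' < Np p)
    (h : enc p m = enc p m') : m = m' := by
  have hEpos : 0 < Ep p := Ep_pos hp3 hpo
  have hOpos : 0 < Op p := Op_pos hp3 hpo
  unfold enc at h
  split_ifs at h with h1 h2 h2
  · have e1 : 2 * (m / Ep p) = 2 * (m' / Ep p) := congrArg Prod.fst h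
    have e2 : 2 * (m % Ep p) = 2 * (m' % Ep p) := congrArg Prod.snd h
    have d1 := Nat.div_add_mod m (Ep p)
    have d2 := Nat.div_add_mod m' (Ep p)
    nlinarith [Nat.div_add_mod m (Ep p), Nat.div_add_mod m' (Ep p)]
  · have := congrArg (fun z : ℕ × ℕ => z.1 % 2) h
    simp [Nat.mul_add_mod] at this
  · have := congrArg (fun z : ℕ × ℕ => z.1 % 2) h
    simp [Nat.mul_add_mod] at this
  · have e1 : 2 * ((m - Ep p * Ep p) / Op p) + 1 = 2 * ((m' - Ep p * Ep p) / Op p) + 1 :=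
      congrArg Prod.fst h
    have e2 : 2 * ((m - Ep p * Ep p) % Op p) + 1 = 2 * ((m' - Ep p * Ep p) % Op p) + 1 :=
      congrArg Prod.snd h
    have d1 := Nat.div_add_mod (m - Ep p * Ep p) (Op p)
    have d2 := Nat.div_add_mod (m' - Ep p * Ep p) (Op p)
    have : m - Ep p * Ep p = m' - Ep p * Ep p := by nlinarith
    omega

lemma enc_surj {a b : ℕ} (ha : a < p) (hb : b < p) (hab : a % 2 = b % 2) :
    ∃ m, m < Np p ∧ enc p m = (a, b) := by
  have h1 : 2 * Ep p = p + 1 := hE hp3 hpo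
  have h2 : 2 * Op p + 1 = p := hO hp3 hpo
  have hNp : Np p = Ep p * Ep p + Op p * Op p := Np_eq hp3 hpo
  have hEpos : 0 < Ep p := Ep_pos hp3 hpo
  have hOpos : 0 < Op p := Op_pos hp3 hpo
  rcases Nat.even_or_odd a with hae | hao
  · have ha2 : a % 2 = 0 := Nat.even_iff.mp hae
    have hb2 : b % 2 = 0 := by omega
    refine ⟨Ep p * (a / 2) + b / 2, ?_, ?_⟩
    · have : a / 2 < Ep p := by omega
      have : b / 2 < Ep p := by omega
      nlinarith
    · have hlt : Ep p * (a / 2) + b / 2 < Ep p * Ep p := by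
        have : a / 2 < Ep p := by omega
        have : b / 2 < Ep p := by omega
        nlinarith
      unfold enc
      rw [if_pos hlt]
      have hd : (Ep p * (a / 2) + b / 2) / Ep p = a / 2 + (b / 2) / Ep p :=
        Nat.mul_add_div hEpos _ _
      have hd2 : (b / 2) / Ep p = 0 := Nat.div_eq_of_lt (by omega)
      have hm : (Ep p * (a / 2) + b / 2) % Ep p = (b / 2) % Ep p := by
        exact Nat.mul_add_mod _ _ _
      have hm2 : (b / 2) % Ep p = b / 2 := Nat.mod_eq_of_lt (by omega)
      rw [hd, hd2, hm, hm2]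
      ext <;> simp <;> omega
  · have ha2 : a % 2 = 1 := Nat.odd_iff.mp hao
    have hb2 : b % 2 = 1 := by omega
    refine ⟨Ep p * Ep p + (Op p * (a / 2) + b / 2), ?_, ?_⟩
    · have : a / 2 < Op p := by omega
      have : b / 2 < Op p := by omega
      nlinarith
    · have hnlt : ¬ (Ep p * Ep p + (Op p * (a / 2) + b / 2) < Ep p * Ep p) := by omega
      unfold enc
      rw [if_neg hnlt]
      have hsub : Ep p * Ep p + (Op p * (a / 2) + b / 2) - Ep p * Ep p
          = Op p * (a / 2) + b / 2 := by omega
      rw [hsub]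
      have hd : (Op p * (a / 2) + b / 2) / Op p = a / 2 + (b / 2) / Op p :=
        Nat.mul_add_div hOpos _ _
      have hd2 : (b / 2) / Op p = 0 := Nat.div_eq_of_lt (by omega)
      have hm : (Op p * (a / 2) + b / 2) % Op p = (b / 2) % Op p := by
        exact Nat.mul_add_mod _ _ _
      have hm2 : (b / 2) % Op p = b / 2 := Nat.mod_eq_of_lt (by omega)
      rw [hd, hd2, hm, hm2]
      ext <;> simp <;> omega


end
section
variable {p : ℕ} (hp2 : 2 ≤ p)
include hp2

lemma summable_digits (a : ℕ → ℕ) (ha : ∀ k, a k < p) :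
    Summable (fun k => (a k : ℝ) / (p : ℝ) ^ (k + 1)) := by
  have hp0 : (0:ℝ) < p := by positivity
  refine Summable.of_nonneg_of_le (fun k => by positivity) (fun k => ?_)
    (summable_geometric_of_lt_one (r := 1 / (p:ℝ)) (by positivity)
      (by rw [div_lt_one hp0]; exact_mod_cast by omega))
  have h1 : (a k : ℝ) ≤ (p : ℝ) := by exact_mod_cast (ha k).le
  calc (a k : ℝ) / (p:ℝ) ^ (k+1) ≤ (p:ℝ) / (p:ℝ) ^ (k+1) := by gcongr
    _ = (1/(p:ℝ)) ^ k := by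
        rw [div_pow, one_pow, pow_succ']
        rw [div_eq_div_iff (by positivity) (by positivity)]
        ring

lemma tsum_digits_bounds (a : ℕ → ℕ) (ha : ∀ k, a k < p) (n : ℕ) :
    ∑ k ∈ range n, (a k : ℝ) / (p : ℝ) ^ (k + 1) ≤ (∑' k, (a k : ℝ) / (p : ℝ) ^ (k + 1)) ∧
    (∑' k, (a k : ℝ) / (p : ℝ) ^ (k + 1)) ≤
      (∑ k ∈ range n, (a k : ℝ) / (p : ℝ) ^ (k + 1)) + (1 / (p:ℝ)) ^ n := by
  have hp0 : (0:ℝ) < p := by positivity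
  have hp1 : (1:ℝ) < p := by exact_mod_cast by omega
  have hsum := summable_digits hp2 a ha
  have hsplit := (hsum.sum_add_tsum_nat_add n).symm
  -- hsplit : tsum = ∑ k in range n + ∑' k, a (k+n) / p^(k+n+1)
  have htail_nonneg : 0 ≤ ∑' k, (a (k + n) : ℝ) / (p:ℝ) ^ (k + n + 1) :=
    tsum_nonneg (fun k => by positivity)
  have htail_le : (∑' k, (a (k + n) : ℝ) / (p:ℝ) ^ (k + n + 1)) ≤ (1 / (p:ℝ)) ^ n := by
    have hgeo : Summable (fun k : ℕ => ((p:ℝ) - 1) / (p:ℝ) ^ (k + n + 1)) := by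
      apply Summable.mul_left
      have : Summable (fun k : ℕ => (1 / (p:ℝ)) ^ k) :=
        summable_geometric_of_lt_one (by positivity) (by rw [div_lt_one hp0]; exact hp1)
      apply Summable.mul_right ((1/(p:ℝ))^(n+1)) at this
      refine this.congr fun k => ?_
      rw [div_pow, div_pow, one_pow, one_pow, div_mul_div_comm, one_mul, ← pow_add]
      ring_nf
    refine le_trans (Summable.tsum_le_tsum (fun k => ?_) ((hsum.comp_injective (add_left_injective n)).congr (fun k => rfl)) hgeo) ?_
    · apply div_le_div_of_nonneg_right ?_ (by positivity)
      · have h2 : (a (k + n) : ℝ) + 1 ≤ (p:ℝ) := by exact_mod_cast ha (k + n)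
        linarith
    · have hc : ∀ k : ℕ, ((p:ℝ) - 1) / (p:ℝ) ^ (k + n + 1)
          = (((p:ℝ) - 1) / (p:ℝ) ^ (n + 1)) * (1 / (p:ℝ)) ^ k := by
        intro k
        rw [div_pow, one_pow, div_mul_div_comm, mul_one, ← pow_add]
        ring_nf
      rw [funext hc, tsum_mul_left, tsum_geometric_of_lt_one (by positivity)
        (by rw [div_lt_one hp0]; exact hp1)]
      rw [div_pow, one_pow]
      have h1 : (1 - 1/(p:ℝ))⁻¹ = p / (p - 1) := by
        rw [one_sub_div (by linarith), inv_div]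
      rw [h1]
      have hp1' : (p:ℝ) - 1 ≠ 0 := by linarith
      rw [div_mul_div_comm]
      apply le_of_eq
      field_simp
      ring
  constructor
  · rw [hsplit]
    have : ∀ k, 0 ≤ (a (k + n) : ℝ) / (p:ℝ) ^ (k + n + 1) := fun k => by positivity
    linarith
  · rw [hsplit]
    linarith

end

/-- value of the first `n` `sel`-digits of the point coded by `i`. -/
noncomputable def ccoord (p : ℕ) (sel : ℕ × ℕ → ℕ) (n i : ℕ) : ℕ :=
  ∑ k ∈ range n, sel (enc p (i / Np p ^ k % Np p)) * p ^ k

/-- one coordinate of the coding map. -/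
noncomputable def hcoord (p : ℕ) (sel : ℕ × ℕ → ℕ) (t : ℝ) : ℝ :=
  ∑' k : ℕ, ((sel (enc p (⌊(Np p : ℝ) ^ (k+1) * t⌋₊ % Np p)) : ℝ)) / (p:ℝ) ^ (k+1)

/-- the coding map from `[0,1]` onto the fractal. -/
noncomputable def hmap (p : ℕ) (t : ℝ) : ℝ × ℝ :=
  (hcoord p Prod.fst t, hcoord p Prod.snd t)

lemma Np_ge (p : ℕ) (hp3 : 3 ≤ p) : 5 ≤ Np p := by
  have h9 : 9 ≤ p * p := Nat.mul_le_mul hp3 hp3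
  unfold Np; omega

lemma corner_coord {p : ℕ} (hp3 : 3 ≤ p) (hpo : p % 2 = 1) (sel : ℕ × ℕ → ℕ)
    (hsel : ∀ m, m < Np p → sel (enc p m) < p) (n : ℕ) (t : ℝ) :
    (ccoord p sel n ⌊(Np p : ℝ)^n * t⌋₊ : ℝ) / (p:ℝ)^n ≤ hcoord p sel t ∧
      hcoord p sel t ≤ (ccoord p sel n ⌊(Np p : ℝ)^n * t⌋₊ : ℝ) / (p:ℝ)^n + (1/(p:ℝ))^n := by
  have hN5 : 5 ≤ Np p := Np_ge p hp3
  have hN0 : 0 < Np p := by omega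
  have hNR : (0:ℝ) < (Np p : ℝ) := by exact_mod_cast hN0
  have hp0 : (0:ℝ) < (p:ℝ) := by positivity
  set N := Np p with hNdef
  set jt := ⌊(N : ℝ)^n * t⌋₊ with hjt
  have haval : ∀ k : ℕ, sel (enc p (⌊(N : ℝ) ^ (k+1) * t⌋₊ % N)) < p :=
    fun k => hsel _ (Nat.mod_lt _ hN0)
  have hb := tsum_digits_bounds (p := p) (by omega)
      (fun k => sel (enc p (⌊(N : ℝ) ^ (k+1) * t⌋₊ % N))) haval n
  have hco : hcoord p sel t
      = ∑' k : ℕ, ((sel (enc p (⌊(N : ℝ) ^ (k+1) * t⌋₊ % N)) : ℝ)) / (p:ℝ) ^ (k+1) := rfl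
  have hdigj : ∀ k, k < n → ⌊(N : ℝ) ^ (k+1) * t⌋₊ % N = jt / N ^ (n-1-k) % N := by
    intro k hk
    have hexp : (k+1) + (n-1-k) = n := by omega
    have hpow : ((N:ℝ))^(k+1) * ((N:ℝ))^(n-1-k) = ((N:ℝ))^n := by rw [← pow_add, hexp]
    have hNe : ((N^(n-1-k) : ℕ) : ℝ) ≠ 0 := by positivity
    have hfrac : (N : ℝ) ^ (k+1) * t = ((N : ℝ)^n * t) / ((N^(n-1-k) : ℕ) : ℝ) := by
      rw [eq_div_iff hNe]
      push_cast
      linear_combination t * hpow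
    rw [hfrac, Nat.floor_div_natCast]
  have key : ∑ k ∈ range n, ((sel (enc p (⌊(N : ℝ) ^ (k+1) * t⌋₊ % N)) : ℝ)) / (p:ℝ) ^ (k+1)
      = (ccoord p sel n jt : ℝ) / (p:ℝ)^n := by
    have step1 : ∑ k ∈ range n, ((sel (enc p (⌊(N : ℝ) ^ (k+1) * t⌋₊ % N)) : ℝ)) / (p:ℝ) ^ (k+1)
        = ∑ k ∈ range n,
          (fun m => ((sel (enc p (jt / N ^ m % N)) : ℝ)) * (p:ℝ)^m / (p:ℝ)^n) (n - 1 - k) := by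
      refine Finset.sum_congr rfl fun k hk => ?_
      have hk' := Finset.mem_range.mp hk
      simp only
      rw [hdigj k hk']
      have hpe : (p:ℝ)^(n-1-k) * (p:ℝ)^(k+1) = (p:ℝ)^n := by
        rw [← pow_add]; congr 1; omega
      rw [← hpe, mul_comm ((sel (enc p (jt / N ^ (n-1-k) % N)) : ℝ)) ((p:ℝ)^(n-1-k)),
        mul_div_mul_left _ _ (by positivity : ((p:ℝ)^(n-1-k)) ≠ 0)]
    have step2 := Finset.sum_range_reflect
      (fun m => ((sel (enc p (jt / N ^ m % N)) : ℝ)) * (p:ℝ)^m / (p:ℝ)^n) n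
    rw [step1, step2]
    rw [← Finset.sum_div]
    congr 1
    unfold ccoord
    push_cast
    rfl
  rw [hco, ← hNdef] at *
  constructor
  · rw [← key]; exact hb.1
  · rw [← key]; exact hb.2

lemma ccoord_inj {p : ℕ} (hp3 : 3 ≤ p) (hpo : p % 2 = 1) (n : ℕ) {i i' : ℕ}
    (hi : i < Np p ^ n) (hi' : i' < Np p ^ n)
    (h1 : ccoord p Prod.fst n i = ccoord p Prod.fst n i')
    (h2 : ccoord p Prod.snd n i = ccoord p Prod.snd n i') : i = i' := by
  have hN5 : 5 ≤ Np p := Np_ge p hp3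
  have hN0 : 0 < Np p := by omega
  have hp0 : 0 < p := by omega
  have hdlt : ∀ m : ℕ, m % Np p < Np p := fun m => Nat.mod_lt _ hN0
  have hdig : ∀ k, k < n → enc p (i / Np p ^ k % Np p) = enc p (i' / Np p ^ k % Np p) := by
    intro k hk
    have e1 := digit_of_sum p hp0 n (fun k => (enc p (i / Np p ^ k % Np p)).1)
      (fun k _ => (enc_valid hp3 hpo (hdlt _)).1) k hk
    have e1' := digit_of_sum p hp0 n (fun k => (enc p (i' / Np p ^ k % Np p)).1)
      (fun k _ => (enc_valid hp3 hpo (hdlt _)).1) k hk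
    have e2 := digit_of_sum p hp0 n (fun k => (enc p (i / Np p ^ k % Np p)).2)
      (fun k _ => (enc_valid hp3 hpo (hdlt _)).2.1) k hk
    have e2' := digit_of_sum p hp0 n (fun k => (enc p (i' / Np p ^ k % Np p)).2)
      (fun k _ => (enc_valid hp3 hpo (hdlt _)).2.1) k hk
    unfold ccoord at h1 h2
    rw [h1] at e1
    rw [h2] at e2
    exact Prod.ext (e1.symm.trans e1') (e2.symm.trans e2')
  have hdig' : ∀ k, k < n → i / Np p ^ k % Np p = i' / Np p ^ k % Np p := by
    intro k hk
    exact enc_inj hp3 hpo (hdlt _) (hdlt _) (hdig k hk)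
  have r1 := rec_digits (Np p) hN0 n i hi
  have r2 := rec_digits (Np p) hN0 n i' hi'
  rw [← r1, ← r2]
  exact Finset.sum_congr rfl fun k hk => by rw [hdig' k (Finset.mem_range.mp hk)]


open MeasureTheory in
lemma core {p : ℕ} (hp3 : 3 ≤ p) (hpo : p % 2 = 1) (n : ℕ) (U : Set (ℝ × ℝ))
    (hU : EMetric.diam U ≤ ENNReal.ofReal ((1 / (p:ℝ)) ^ n)) :
    volume (hmap p ⁻¹' U ∩ Set.Ico (0:ℝ) 1)
      ≤ ENNReal.ofReal (49 * ((Np p : ℝ)⁻¹) ^ n) := by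
  classical
  have hN5 : 5 ≤ Np p := Np_ge p hp3
  have hN0 : 0 < Np p := by omega
  have hNR : (0:ℝ) < (Np p : ℝ) := by exact_mod_cast hN0
  have hp0 : (0:ℝ) < (p:ℝ) := by positivity
  set N := Np p with hNdef
  set S := hmap p ⁻¹' U ∩ Set.Ico (0:ℝ) 1 with hS
  rcases S.eq_empty_or_nonempty with he | ⟨t₀, ht₀⟩
  · rw [he]; simp
  set j : ℝ → ℕ := fun t => ⌊(N:ℝ)^n * t⌋₊ with hj
  have hjlt : ∀ t ∈ Set.Ico (0:ℝ) 1, j t < N^n := by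
    rintro t ⟨ht0, ht1⟩
    have h1 : (N:ℝ)^n * t < (N:ℝ)^n := by nlinarith [pow_pos hNR n]
    have h2 : (⌊(N:ℝ)^n * t⌋₊ : ℝ) ≤ (N:ℝ)^n * t := Nat.floor_le (by positivity)
    have h3 : ((j t : ℕ) : ℝ) < ((N^n : ℕ) : ℝ) := by push_cast; simp only [hj]; linarith
    exact_mod_cast h3
  have hmem_cyl : ∀ t ∈ Set.Ico (0:ℝ) 1,
      t ∈ Set.Ico ((j t : ℝ)/(N:ℝ)^n) (((j t : ℝ) + 1)/(N:ℝ)^n) := by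
    rintro t ⟨ht0, ht1⟩
    have hpow : (0:ℝ) < (N:ℝ)^n := by positivity
    have h2 : (⌊(N:ℝ)^n * t⌋₊ : ℝ) ≤ (N:ℝ)^n * t := Nat.floor_le (by positivity)
    have h3 : (N:ℝ)^n * t < (⌊(N:ℝ)^n * t⌋₊ : ℝ) + 1 := Nat.lt_floor_add_one _
    constructor
    · rw [div_le_iff₀ hpow]
      simp only [hj]
      linarith [h2]
    · rw [lt_div_iff₀ hpow]
      simp only [hj]
      linarith [h3]
  have hdist : ∀ t ∈ S, ∀ t' ∈ S, dist (hmap p t) (hmap p t') ≤ (1/(p:ℝ))^n := by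
    intro t ht t' ht'
    have h1 : edist (hmap p t) (hmap p t') ≤ EMetric.diam U :=
      EMetric.edist_le_diam_of_mem ht.1 ht'.1
    have h2 : edist (hmap p t) (hmap p t') ≤ ENNReal.ofReal ((1/(p:ℝ))^n) := h1.trans hU
    rw [edist_dist] at h2
    exact (ENNReal.ofReal_le_ofReal_iff (by positivity)).mp h2
  have hsel1 : ∀ m, m < Np p → Prod.fst (enc p m) < p := fun m hm => (enc_valid hp3 hpo hm).1
  have hsel2 : ∀ m, m < Np p → Prod.snd (enc p m) < p := fun m hm => (enc_valid hp3 hpo hm).2.1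
  have hone : (p:ℝ)^n * (1/(p:ℝ))^n = 1 := by
    rw [← mul_pow, mul_one_div, div_self (ne_of_gt hp0), one_pow]
  have hppos : (0:ℝ) < (p:ℝ)^n := by positivity
  have hwin : ∀ t ∈ S,
      ccoord p Prod.fst n (j t) ≤ ccoord p Prod.fst n (j t₀) + 3 ∧
      ccoord p Prod.fst n (j t₀) ≤ ccoord p Prod.fst n (j t) + 3 ∧
      ccoord p Prod.snd n (j t) ≤ ccoord p Prod.snd n (j t₀) + 3 ∧
      ccoord p Prod.snd n (j t₀) ≤ ccoord p Prod.snd n (j t) + 3 := by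
    intro t ht
    have hc1 := corner_coord hp3 hpo Prod.fst hsel1 n t
    have hc1' := corner_coord hp3 hpo Prod.fst hsel1 n t₀
    have hc2 := corner_coord hp3 hpo Prod.snd hsel2 n t
    have hc2' := corner_coord hp3 hpo Prod.snd hsel2 n t₀
    have hd := hdist t ht t₀ ht₀
    rw [Prod.dist_eq] at hd
    have hd1 : |(hmap p t).1 - (hmap p t₀).1| ≤ (1/(p:ℝ))^n := by
      have hle := le_max_left (dist (hmap p t).1 (hmap p t₀).1) (dist (hmap p t).2 (hmap p t₀).2)
      rw [Real.dist_eq] at hle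
      exact le_trans hle hd
    have hd2 : |(hmap p t).2 - (hmap p t₀).2| ≤ (1/(p:ℝ))^n := by
      have hle := le_max_right (dist (hmap p t).1 (hmap p t₀).1) (dist (hmap p t).2 (hmap p t₀).2)
      rw [Real.dist_eq] at hle
      exact le_trans hle hd
    have habs1 := abs_le.mp hd1
    have habs2 := abs_le.mp hd2
    simp only [hmap] at habs1 habs2
    have key : ∀ (c c' : ℕ) (u u' : ℝ),
        (c:ℝ)/(p:ℝ)^n ≤ u → u ≤ (c:ℝ)/(p:ℝ)^n + (1/(p:ℝ))^n →
        (c':ℝ)/(p:ℝ)^n ≤ u' → u' ≤ (c':ℝ)/(p:ℝ)^n + (1/(p:ℝ))^n →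
        u - u' ≤ (1/(p:ℝ))^n → u' - u ≤ (1/(p:ℝ))^n →
        c ≤ c' + 3 ∧ c' ≤ c + 3 := by
      intro c c' u u' h1 h2 h1' h2' hles hles'
      have e1 : (c:ℝ) ≤ (p:ℝ)^n * u := by
        rw [div_le_iff₀ hppos] at h1; linarith
      have e2 : (p:ℝ)^n * u ≤ (c:ℝ) + 1 := by
        have hmul := mul_le_mul_of_nonneg_left h2 (le_of_lt hppos)
        rw [mul_add, hone, mul_comm ((p:ℝ)^n) ((c:ℝ)/(p:ℝ)^n),
          div_mul_cancel₀ _ (ne_of_gt hppos)] at hmul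
        linarith
      have e1' : (c':ℝ) ≤ (p:ℝ)^n * u' := by
        rw [div_le_iff₀ hppos] at h1'; linarith
      have e2' : (p:ℝ)^n * u' ≤ (c':ℝ) + 1 := by
        have hmul := mul_le_mul_of_nonneg_left h2' (le_of_lt hppos)
        rw [mul_add, hone, mul_comm ((p:ℝ)^n) ((c':ℝ)/(p:ℝ)^n),
          div_mul_cancel₀ _ (ne_of_gt hppos)] at hmul
        linarith
      have hm1 : (p:ℝ)^n * u - (p:ℝ)^n * u' ≤ 1 := by
        have hmul := mul_le_mul_of_nonneg_left hles (le_of_lt hppos)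
        rw [mul_sub] at hmul
        rw [hone] at hmul
        linarith
      have hm2 : (p:ℝ)^n * u' - (p:ℝ)^n * u ≤ 1 := by
        have hmul := mul_le_mul_of_nonneg_left hles' (le_of_lt hppos)
        rw [mul_sub] at hmul
        rw [hone] at hmul
        linarith
      constructor
      · have hr : (c:ℝ) ≤ (c':ℝ) + 3 := by linarith
        exact_mod_cast hr
      · have hr : (c':ℝ) ≤ (c:ℝ) + 3 := by linarith
        exact_mod_cast hr
    have k1 := key _ _ _ _ hc1.1 hc1.2 hc1'.1 hc1'.2 habs1.2 (by linarith [habs1.1])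
    have k2 := key _ _ _ _ hc2.1 hc2.2 hc2'.1 hc2'.2 habs2.2 (by linarith [habs2.1])
    exact ⟨k1.1, k1.2, k2.1, k2.2⟩
  set Jset : Finset ℕ := (Finset.range (N^n)).filter (fun i => ∃ t, t ∈ S ∧ j t = i) with hJ
  have hcover : S ⊆ ⋃ i ∈ Jset, Set.Ico ((i:ℝ)/(N:ℝ)^n) (((i:ℝ)+1)/(N:ℝ)^n) := by
    intro t ht
    have htI : t ∈ Set.Ico (0:ℝ) 1 := ht.2
    refine Set.mem_biUnion
      (Finset.mem_filter.mpr ⟨Finset.mem_range.mpr (hjlt t htI), t, ht, rfl⟩) ?_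
    exact hmem_cyl t htI
  have hcard : Jset.card ≤ 49 := by
    have hmapsto : ∀ i ∈ Jset, (ccoord p Prod.fst n i, ccoord p Prod.snd n i) ∈
        (Finset.Icc (ccoord p Prod.fst n (j t₀) - 3) (ccoord p Prod.fst n (j t₀) + 3) ×ˢ
         Finset.Icc (ccoord p Prod.snd n (j t₀) - 3) (ccoord p Prod.snd n (j t₀) + 3)) := by
      intro i hi
      obtain ⟨hir, t, htS, hjti⟩ := Finset.mem_filter.mp hi
      obtain ⟨w1, w2, w3, w4⟩ := hwin t htS
      rw [← hjti, Finset.mem_product]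
      constructor <;> rw [Finset.mem_Icc] <;> constructor <;> simp only <;> omega
    have hinj : Set.InjOn (fun i => (ccoord p Prod.fst n i, ccoord p Prod.snd n i)) ↑Jset := by
      intro i hi i' hi' hii
      have hir : i < N^n := Finset.mem_range.mp (Finset.mem_filter.mp hi).1
      have hir' : i' < N^n := Finset.mem_range.mp (Finset.mem_filter.mp hi').1
      exact ccoord_inj hp3 hpo n hir hir' (congrArg Prod.fst hii) (congrArg Prod.snd hii)
    have hle := Finset.card_le_card_of_injOn _ hmapsto hinj
    have hcc : (Finset.Icc (ccoord p Prod.fst n (j t₀) - 3) (ccoord p Prod.fst n (j t₀) + 3) ×ˢ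
         Finset.Icc (ccoord p Prod.snd n (j t₀) - 3) (ccoord p Prod.snd n (j t₀) + 3)).card
         ≤ 49 := by
      rw [Finset.card_product, Nat.card_Icc, Nat.card_Icc]
      have h7 : ∀ c : ℕ, c + 3 + 1 - (c - 3) ≤ 7 := fun c => by omega
      calc _ ≤ 7 * 7 := Nat.mul_le_mul (h7 _) (h7 _)
        _ = 49 := rfl
    omega
  have hIco : ∀ i : ℕ, volume (Set.Ico ((i:ℝ)/(N:ℝ)^n) (((i:ℝ)+1)/(N:ℝ)^n))
      = ENNReal.ofReal (((N:ℝ)⁻¹)^n) := by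
    intro i
    rw [Real.volume_Ico]
    congr 1
    rw [div_sub_div_same, add_sub_cancel_left, one_div, ← inv_pow]
  calc volume S ≤ volume (⋃ i ∈ Jset, Set.Ico ((i:ℝ)/(N:ℝ)^n) (((i:ℝ)+1)/(N:ℝ)^n)) :=
        measure_mono hcover
    _ ≤ ∑ i ∈ Jset, volume (Set.Ico ((i:ℝ)/(N:ℝ)^n) (((i:ℝ)+1)/(N:ℝ)^n)) :=
        measure_biUnion_finset_le _ _
    _ = ∑ _i ∈ Jset, ENNReal.ofReal (((N:ℝ)⁻¹)^n) := Finset.sum_congr rfl fun i _ => hIco i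
    _ = Jset.card • ENNReal.ofReal (((N:ℝ)⁻¹)^n) := Finset.sum_const _
    _ ≤ 49 • ENNReal.ofReal (((N:ℝ)⁻¹)^n) := by
        rw [nsmul_eq_mul, nsmul_eq_mul]
        exact mul_le_mul_left (by exact_mod_cast hcard) _
    _ = ENNReal.ofReal (49 * ((N:ℝ)⁻¹)^n) := by
        rw [nsmul_eq_mul, ENNReal.ofReal_mul (by norm_num : (0:ℝ) ≤ 49)]
        congr 1
        simp


lemma diam_prod_le (s t : Set ℝ) :
    EMetric.diam (s ×ˢ t) ≤ max (EMetric.diam s) (EMetric.diam t) :=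
  EMetric.diam_le fun x hx y hy => by
    rw [Prod.edist_eq]
    exact max_le_max (EMetric.edist_le_diam_of_mem hx.1 hy.1)
      (EMetric.edist_le_diam_of_mem hx.2 hy.2)

open MeasureTheory in
lemma est {p : ℕ} (hp3 : 3 ≤ p) (hpo : p % 2 = 1) (U : Set (ℝ × ℝ))
    (hUd : EMetric.diam U ≤ ENNReal.ofReal (1/(p:ℝ))) :
    volume (hmap p ⁻¹' U ∩ Set.Ico (0:ℝ) 1)
      ≤ ENNReal.ofReal (49 * (p:ℝ)^2)
        * EMetric.diam U ^ (Real.log (Np p) / Real.log p) := by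
  have hp1 : (1:ℝ) < p := by exact_mod_cast (by omega : 1 < p)
  have hp0 : (0:ℝ) < p := by linarith
  have hN5 : 5 ≤ Np p := Np_ge p hp3
  have hNR1 : (1:ℝ) < (Np p : ℝ) := by exact_mod_cast (by omega : 1 < Np p)
  set s₀ := Real.log (Np p) / Real.log p with hs₀
  have hlogp : 0 < Real.log p := Real.log_pos hp1
  have hs₀pos : 0 < s₀ := div_pos (Real.log_pos hNR1) hlogp
  have hps₀ : (p:ℝ) ^ s₀ = (Np p : ℝ) := by
    rw [hs₀, Real.rpow_def_of_pos hp0, mul_comm, div_mul_cancel₀ _ (ne_of_gt hlogp),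
      Real.exp_log (by linarith)]
  rcases eq_or_lt_of_le (zero_le : 0 ≤ EMetric.diam U) with hzero | hposd
  · -- diam = 0
    have hd0 : EMetric.diam U = 0 := hzero.symm
    have hall : ∀ n : ℕ, volume (hmap p ⁻¹' U ∩ Set.Ico (0:ℝ) 1)
        ≤ ENNReal.ofReal (49 * ((Np p : ℝ)⁻¹) ^ n) := fun n =>
      core hp3 hpo n U (by rw [hd0]; exact zero_le)
    have htend : Filter.Tendsto (fun n : ℕ => ENNReal.ofReal (49 * ((Np p:ℝ)⁻¹)^n))
        Filter.atTop (nhds 0) := by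
      rw [show (0:ℝ≥0∞) = ENNReal.ofReal 0 by simp]
      apply ENNReal.tendsto_ofReal
      rw [show (0:ℝ) = 49 * 0 by ring]
      apply Filter.Tendsto.const_mul
      apply tendsto_pow_atTop_nhds_zero_of_lt_one (by positivity)
      rw [inv_lt_one_iff₀]
      right; exact hNR1
    have hv0 : volume (hmap p ⁻¹' U ∩ Set.Ico (0:ℝ) 1) = 0 :=
      nonpos_iff_eq_zero.mp (ge_of_tendsto' htend hall)
    rw [hv0]
    exact zero_le
  · -- diam > 0
    have hne : EMetric.diam U ≠ ⊤ := by
      intro hcon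
      rw [hcon] at hUd
      exact ENNReal.ofReal_ne_top (top_le_iff.mp hUd)
    set Dr := (EMetric.diam U).toReal with hDr
    have hDr_pos : 0 < Dr := ENNReal.toReal_pos (ne_of_gt hposd) hne
    have hDr_le : Dr ≤ 1/(p:ℝ) := by
      have h := ENNReal.toReal_mono ENNReal.ofReal_ne_top hUd
      rwa [ENNReal.toReal_ofReal (by positivity)] at h
    have hr1 : (1/(p:ℝ)) < 1 := by rw [div_lt_one hp0]; exact hp1
    have hr0 : (0:ℝ) < 1/(p:ℝ) := by positivity
    obtain ⟨n, hn1, hn2⟩ : ∃ n : ℕ, (1/(p:ℝ))^(n+1) < Dr ∧ Dr ≤ (1/(p:ℝ))^n := by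
      classical
      have hex : ∃ m : ℕ, (1/(p:ℝ))^(m+1) < Dr := by
        obtain ⟨k, hk⟩ := exists_pow_lt_of_lt_one hDr_pos hr1
        exact ⟨k, lt_of_le_of_lt (pow_le_pow_of_le_one hr0.le hr1.le (by omega)) hk⟩
      set m := Nat.find hex with hm
      have hfind := Nat.find_spec hex
      refine ⟨m, hfind, ?_⟩
      rcases Nat.eq_zero_or_pos m with hz | hmpos
      · rw [hz, pow_zero]
        linarith
      · have hmin := Nat.find_min hex (m := m - 1) (by omega)
        push_neg at hmin
        calc Dr ≤ (1/(p:ℝ))^(m-1+1) := hmin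
          _ = (1/(p:ℝ))^m := by congr 1; omega
    have hcore := core hp3 hpo n U
      (by rw [← ENNReal.ofReal_toReal hne]; exact ENNReal.ofReal_le_ofReal hn2)
    refine le_trans hcore ?_
    have hNinv : ((Np p:ℝ)⁻¹)^n = ((1/(p:ℝ))^n) ^ s₀ := by
      rw [← Real.rpow_natCast (1/(p:ℝ)) n, ← Real.rpow_mul hr0.le, mul_comm,
        Real.rpow_mul hr0.le, Real.rpow_natCast, one_div, Real.inv_rpow hp0.le, hps₀]
    have hstep : ((1/(p:ℝ))^n) ^ s₀ ≤ ((p:ℝ) * Dr) ^ s₀ := by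
      apply Real.rpow_le_rpow (by positivity) ?_ hs₀pos.le
      have hid : (p:ℝ) * (1/(p:ℝ))^(n+1) = (1/(p:ℝ))^n := by
        rw [pow_succ]
        field_simp
      calc (1/(p:ℝ))^n = (p:ℝ) * (1/(p:ℝ))^(n+1) := hid.symm
        _ ≤ (p:ℝ) * Dr := by
            apply mul_le_mul_of_nonneg_left hn1.le hp0.le
    have hsplit : ((p:ℝ) * Dr) ^ s₀ = (p:ℝ) ^ s₀ * Dr ^ s₀ :=
      Real.mul_rpow hp0.le hDr_pos.le
    have hps2 : (p:ℝ) ^ s₀ ≤ (p:ℝ)^2 := by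
      have hs₀2 : s₀ ≤ 2 := by
        rw [hs₀, div_le_iff₀ hlogp]
        have hle : (Np p : ℝ) ≤ (p:ℝ)^2 := by
          have h2N : (p * p + 1) ≤ 2 * (p * p) := by nlinarith
          have : (Np p : ℕ) ≤ p * p := by unfold Np; omega
          have := (Nat.cast_le (α := ℝ)).mpr this
          push_cast at this ⊢
          nlinarith
        calc Real.log (Np p) ≤ Real.log ((p:ℝ)^2) :=
              Real.log_le_log (by linarith) hle
          _ = 2 * Real.log p := by
              rw [Real.log_pow]; push_cast; ring
      calc (p:ℝ) ^ s₀ ≤ (p:ℝ) ^ (2:ℝ) :=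
            Real.rpow_le_rpow_of_exponent_le hp1.le hs₀2
        _ = (p:ℝ)^2 := by
            rw [show ((2:ℝ) = ((2:ℕ):ℝ)) by norm_num, Real.rpow_natCast]
    have hfinal : 49 * ((Np p:ℝ)⁻¹)^n ≤ 49 * (p:ℝ)^2 * Dr ^ s₀ := by
      have hDrs : 0 ≤ Dr ^ s₀ := Real.rpow_nonneg hDr_pos.le _
      calc 49 * ((Np p:ℝ)⁻¹)^n = 49 * (((1/(p:ℝ))^n) ^ s₀) := by rw [hNinv]
        _ ≤ 49 * ((p:ℝ) ^ s₀ * Dr ^ s₀) := by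
            rw [← hsplit]; nlinarith
        _ ≤ 49 * ((p:ℝ)^2 * Dr ^ s₀) := by nlinarith
        _ = 49 * (p:ℝ)^2 * Dr ^ s₀ := by ring
    calc ENNReal.ofReal (49 * ((Np p:ℝ)⁻¹)^n) ≤ ENNReal.ofReal (49 * (p:ℝ)^2 * Dr ^ s₀) :=
          ENNReal.ofReal_le_ofReal hfinal
      _ = ENNReal.ofReal (49 * (p:ℝ)^2) * ENNReal.ofReal (Dr ^ s₀) :=
          ENNReal.ofReal_mul (by positivity)
      _ = ENNReal.ofReal (49 * (p:ℝ)^2) * EMetric.diam U ^ s₀ := by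
          rw [← ENNReal.ofReal_rpow_of_pos hDr_pos, ENNReal.ofReal_toReal hne]


/-- The fractal set. -/
def Fset (p : ℕ) : Set (ℝ × ℝ) :=
  {xy : ℝ × ℝ | ∃ x y : ℕ → ℕ,
      (∀ n, x n < p) ∧ (∀ n, y n < p) ∧
      xy.1 = ∑' n : ℕ, (x n : ℝ) / (p : ℝ) ^ (n + 1) ∧
      xy.2 = ∑' n : ℕ, (y n : ℝ) / (p : ℝ) ^ (n + 1) ∧
      ∀ n, x n % 2 = y n % 2}

lemma hmap_mem {p : ℕ} (hp3 : 3 ≤ p) (hpo : p % 2 = 1) (t : ℝ) : hmap p t ∈ Fset p := by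
  have hN5 : 5 ≤ Np p := Np_ge p hp3
  have hN0 : 0 < Np p := by omega
  refine ⟨fun k => (enc p (⌊(Np p : ℝ) ^ (k+1) * t⌋₊ % Np p)).1,
    fun k => (enc p (⌊(Np p : ℝ) ^ (k+1) * t⌋₊ % Np p)).2,
    fun k => (enc_valid hp3 hpo (Nat.mod_lt _ hN0)).1,
    fun k => (enc_valid hp3 hpo (Nat.mod_lt _ hN0)).2.1,
    rfl, rfl,
    fun k => (enc_valid hp3 hpo (Nat.mod_lt _ hN0)).2.2⟩

/-- corner values of covering squares. -/
noncomputable def cxy (p : ℕ) (sel : ℕ × ℕ → ℕ) (n : ℕ) (w : Fin n → Fin (Np p)) : ℝ :=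
  ∑ k : Fin n, ((sel (enc p (w k)) : ℝ)) / (p:ℝ) ^ ((k:ℕ)+1)

/-- covering squares. -/
noncomputable def Qset (p n : ℕ) (w : Fin n → Fin (Np p)) : Set (ℝ × ℝ) :=
  Set.Icc (cxy p Prod.fst n w) (cxy p Prod.fst n w + (1/(p:ℝ))^n) ×ˢ
  Set.Icc (cxy p Prod.snd n w) (cxy p Prod.snd n w + (1/(p:ℝ))^n)

open MeasureTheory in
lemma upper {p : ℕ} (hp3 : 3 ≤ p) (hpo : p % 2 = 1) (d : ℝ)
    (hd : Real.log (Np p) / Real.log p < d) : μH[d] (Fset p) = 0 := by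
  have hp1 : (1:ℝ) < p := by exact_mod_cast (by omega : 1 < p)
  have hp0 : (0:ℝ) < p := by linarith
  have hN5 : 5 ≤ Np p := Np_ge p hp3
  have hNR1 : (1:ℝ) < (Np p : ℝ) := by exact_mod_cast (by omega : 1 < Np p)
  have hlogp : 0 < Real.log p := Real.log_pos hp1
  have hs₀pos : 0 < Real.log (Np p) / Real.log p :=
    div_pos (Real.log_pos hNR1) hlogp
  have hd0 : 0 < d := lt_trans hs₀pos hd
  have hr0 : (0:ℝ) < 1/(p:ℝ) := by positivity
  have hr1 : (1/(p:ℝ)) < 1 := by rw [div_lt_one hp0]; exact hp1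
  -- diameters
  have hdiam : ∀ (n : ℕ) (w : Fin n → Fin (Np p)),
      EMetric.diam (Qset p n w) ≤ ENNReal.ofReal ((1/(p:ℝ))^n) := by
    intro n w
    refine le_trans (diam_prod_le _ _) ?_
    simp only [EMetric.diam]
    rw [Real.ediam_Icc, Real.ediam_Icc, add_sub_cancel_left, add_sub_cancel_left, max_self]
  -- covering
  have hcov : ∀ n : ℕ, Fset p ⊆ ⋃ w : Fin n → Fin (Np p), Qset p n w := by
    intro n
    rintro ⟨xv, yv⟩ ⟨xs, ys, hxs, hys, hex, hey, hpar⟩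
    have hch : ∀ k, ∃ m, m < Np p ∧ enc p m = (xs k, ys k) := fun k =>
      enc_surj hp3 hpo (hxs k) (hys k) (hpar k)
    choose m hm1 hm2 using hch
    refine Set.mem_iUnion.mpr ⟨fun k => ⟨m (k:ℕ), hm1 _⟩, ?_, ?_⟩
    · -- first coordinate
      have hcx : cxy p Prod.fst n (fun k => ⟨m (k:ℕ), hm1 _⟩)
          = ∑ k ∈ range n, (xs k : ℝ) / (p:ℝ)^(k+1) := by
        rw [cxy, ← Fin.sum_univ_eq_sum_range (fun k => (xs k : ℝ) / (p:ℝ)^(k+1)) n]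
        refine Finset.sum_congr rfl fun k _ => ?_
        rw [hm2 (k:ℕ)]
      have hb := tsum_digits_bounds (p := p) (by omega) xs hxs n
      simp only at hex
      constructor
      · rw [hcx, hex]; exact hb.1
      · rw [hcx, hex]; exact hb.2
    · have hcy : cxy p Prod.snd n (fun k => ⟨m (k:ℕ), hm1 _⟩)
          = ∑ k ∈ range n, (ys k : ℝ) / (p:ℝ)^(k+1) := by
        rw [cxy, ← Fin.sum_univ_eq_sum_range (fun k => (ys k : ℝ) / (p:ℝ)^(k+1)) n]
        refine Finset.sum_congr rfl fun k _ => ?_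
        rw [hm2 (k:ℕ)]
      have hb := tsum_digits_bounds (p := p) (by omega) ys hys n
      simp only at hey
      constructor
      · rw [hcy, hey]; exact hb.1
      · rw [hcy, hey]; exact hb.2
  -- apply covering bound
  have hr_tend : Filter.Tendsto (fun n : ℕ => ENNReal.ofReal ((1/(p:ℝ))^n))
      Filter.atTop (nhds 0) := by
    rw [show (0:ℝ≥0∞) = ENNReal.ofReal 0 by simp]
    exact ENNReal.tendsto_ofReal (tendsto_pow_atTop_nhds_zero_of_lt_one hr0.le hr1)
  have hmain := Measure.hausdorffMeasure_le_liminf_sum d (Fset p)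
    (fun n : ℕ => ENNReal.ofReal ((1/(p:ℝ))^n)) hr_tend (Qset p)
    (Filter.Eventually.of_forall fun n => hdiam n)
    (Filter.Eventually.of_forall hcov)
  set c0 : ℝ := (Np p : ℝ) * ((1/(p:ℝ)) ^ d) with hc0
  have hc0nn : 0 ≤ c0 := by
    apply mul_nonneg (by positivity) (Real.rpow_nonneg hr0.le _)
  have hc0lt : c0 < 1 := by
    have hNlt : (Np p : ℝ) < (p:ℝ) ^ d := by
      rw [← Real.exp_log (x := (Np p : ℝ)) (by linarith),
        Real.rpow_def_of_pos hp0]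
      apply Real.exp_lt_exp.mpr
      rw [div_lt_iff₀ hlogp] at hd
      linarith
    rw [hc0, one_div, Real.inv_rpow hp0.le, ← div_eq_mul_inv, div_lt_one]
    · exact hNlt
    · exact Real.rpow_pos_of_pos hp0 d
  have hpern : ∀ n : ℕ, (∑ w : Fin n → Fin (Np p), EMetric.diam (Qset p n w) ^ d)
      ≤ ENNReal.ofReal (c0 ^ n) := by
    intro n
    have hterm : ∀ w : Fin n → Fin (Np p),
        EMetric.diam (Qset p n w) ^ d ≤ ENNReal.ofReal (((1/(p:ℝ))^n) ^ d) := by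
      intro w
      rw [← ENNReal.ofReal_rpow_of_pos (by positivity)]
      exact ENNReal.rpow_le_rpow (hdiam n w) hd0.le
    calc (∑ w : Fin n → Fin (Np p), EMetric.diam (Qset p n w) ^ d)
        ≤ ∑ _w : Fin n → Fin (Np p), ENNReal.ofReal (((1/(p:ℝ))^n) ^ d) :=
          Finset.sum_le_sum fun w _ => hterm w
      _ = (Fintype.card (Fin n → Fin (Np p))) • ENNReal.ofReal (((1/(p:ℝ))^n) ^ d) := by
          rw [Finset.sum_const, Finset.card_univ]
      _ = ((Np p : ℕ)^n : ℕ) • ENNReal.ofReal (((1/(p:ℝ))^n) ^ d) := by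
          rw [Fintype.card_fun, Fintype.card_fin, Fintype.card_fin]
      _ = ENNReal.ofReal ((Np p : ℝ)^n) * ENNReal.ofReal (((1/(p:ℝ))^n) ^ d) := by
          rw [nsmul_eq_mul]
          congr 1
          rw [ENNReal.ofReal_pow (by positivity), ENNReal.ofReal_natCast]
          push_cast
          rfl
      _ = ENNReal.ofReal ((Np p : ℝ)^n * ((1/(p:ℝ))^n) ^ d) :=
          (ENNReal.ofReal_mul (by positivity)).symm
      _ = ENNReal.ofReal (c0 ^ n) := by
          congr 1
          rw [hc0, mul_pow]
          congr 1
          rw [← Real.rpow_natCast (1/(p:ℝ)) n, ← Real.rpow_mul hr0.le, mul_comm,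
            Real.rpow_mul hr0.le, Real.rpow_natCast]
  have hlim : Filter.liminf
      (fun n : ℕ => ∑ w : Fin n → Fin (Np p), EMetric.diam (Qset p n w) ^ d)
      Filter.atTop = 0 := by
    have htends : Filter.Tendsto (fun n : ℕ => ENNReal.ofReal (c0 ^ n))
        Filter.atTop (nhds 0) := by
      rw [show (0:ℝ≥0∞) = ENNReal.ofReal 0 by simp]
      exact ENNReal.tendsto_ofReal (tendsto_pow_atTop_nhds_zero_of_lt_one hc0nn hc0lt)
    refine le_antisymm ?_ zero_le
    calc Filter.liminf _ Filter.atTop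
        ≤ Filter.liminf (fun n : ℕ => ENNReal.ofReal (c0 ^ n)) Filter.atTop :=
          Filter.liminf_le_liminf (Filter.Eventually.of_forall hpern)
      _ = 0 := htends.liminf_eq
  simp only [EMetric.diam] at hlim
  rw [hlim] at hmain
  exact nonpos_iff_eq_zero.mp hmain

open MeasureTheory in
lemma lower {p : ℕ} (hp3 : 3 ≤ p) (hpo : p % 2 = 1) :
    μH[Real.log (Np p) / Real.log p] (Fset p) ≠ 0 := by
  have hp1 : (1:ℝ) < p := by exact_mod_cast (by omega : 1 < p)
  have hp0 : (0:ℝ) < p := by linarith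
  set s₀ := Real.log (Np p) / Real.log p with hs₀
  set C : ℝ≥0∞ := ENNReal.ofReal (49 * (p:ℝ)^2) with hC
  have hC0 : C ≠ 0 := by
    rw [hC]
    exact ne_of_gt (ENNReal.ofReal_pos.mpr (by positivity))
  have hCt : C ≠ ⊤ := ENNReal.ofReal_ne_top
  have hbound : ENNReal.ofReal (1/(p:ℝ)) > 0 := ENNReal.ofReal_pos.mpr (by positivity)
  have hkey : 1 / C ≤ μH[s₀] (Fset p) := by
    rw [Measure.hausdorffMeasure_apply]
    refine le_trans ?_ (le_iSup₂ (ENNReal.ofReal (1/(p:ℝ))) hbound)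
    refine le_iInf fun t => le_iInf fun hst => le_iInf fun htd => ?_
    have hIsub : Set.Ico (0:ℝ) 1 ⊆ ⋃ n, (hmap p ⁻¹' (t n) ∩ Set.Ico (0:ℝ) 1) := by
      intro x hx
      obtain ⟨n, hn⟩ := Set.mem_iUnion.mp (hst (hmap_mem hp3 hpo x))
      exact Set.mem_iUnion.mpr ⟨n, hn, hx⟩
    have h1 : (1:ℝ≥0∞) ≤ ∑' n, volume (hmap p ⁻¹' (t n) ∩ Set.Ico (0:ℝ) 1) := by
      calc (1:ℝ≥0∞) = volume (Set.Ico (0:ℝ) 1) := by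
            rw [Real.volume_Ico]; simp
        _ ≤ volume (⋃ n, (hmap p ⁻¹' (t n) ∩ Set.Ico (0:ℝ) 1)) := measure_mono hIsub
        _ ≤ ∑' n, volume (hmap p ⁻¹' (t n) ∩ Set.Ico (0:ℝ) 1) := measure_iUnion_le _
    have h2 : ∀ n, volume (hmap p ⁻¹' (t n) ∩ Set.Ico (0:ℝ) 1)
        ≤ C * ⨆ _ : (t n).Nonempty, EMetric.diam (t n) ^ s₀ := by
      intro n
      rcases (t n).eq_empty_or_nonempty with he | hne
      · simp [he]
      · rw [iSup_pos hne]
        exact est hp3 hpo (t n) (htd n)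
    have h3 : (1:ℝ≥0∞) ≤ C * ∑' n, ⨆ _ : (t n).Nonempty, EMetric.diam (t n) ^ s₀ := by
      rw [← ENNReal.tsum_mul_left]
      exact h1.trans (ENNReal.tsum_le_tsum h2)
    exact (ENNReal.div_le_iff_le_mul (Or.inl hC0) (Or.inl hCt)).mpr (by rwa [mul_comm] at h3)
  intro h0
  rw [h0] at hkey
  have : (1:ℝ≥0∞) / C ≠ 0 := by
    simp only [ne_eq, ENNReal.div_eq_zero_iff]
    push_neg
    exact ⟨one_ne_zero, hCt⟩
  exact this (nonpos_iff_eq_zero.mp hkey)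


end F0aux

open scoped ENNReal NNReal

/-- the Hausdorff dimension of the fractal F_{0,∞} of pairs of
base-p expansions with digitwise-congruent-mod-2 digits equals
log((p²+1)/2)/log p. -/
theorem dimH_F0 (p : ℕ) (hp : p.Prime) (hodd : Odd p)
    (F : Set (ℝ × ℝ))
    (hF : F = {xy : ℝ × ℝ | ∃ x y : ℕ → ℕ,
      (∀ n, x n < p) ∧ (∀ n, y n < p) ∧
      xy.1 = ∑' n : ℕ, (x n : ℝ) / (p : ℝ) ^ (n + 1) ∧
      xy.2 = ∑' n : ℕ, (y n : ℝ) / (p : ℝ) ^ (n + 1) ∧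
      ∀ n, x n % 2 = y n % 2}) :
    dimH F = ENNReal.ofReal (Real.log (((p : ℝ) ^ 2 + 1) / 2) / Real.log p) := by
  have hpo : p % 2 = 1 := Nat.odd_iff.mp hodd
  have hp3 : 3 ≤ p := by
    have h2 := hp.two_le
    omega
  have hFeq : F = F0aux.Fset p := by rw [hF]; rfl
  have hNcast : ((F0aux.Np p : ℕ) : ℝ) = ((p:ℝ)^2 + 1)/2 := by
    have hmod : p * p % 2 = 1 := by rw [Nat.mul_mod, hpo]
    have h2N : 2 * F0aux.Np p = p * p + 1 := by unfold F0aux.Np; omega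
    have hc : (2:ℝ) * (F0aux.Np p : ℝ) = (p:ℝ) * (p:ℝ) + 1 := by exact_mod_cast h2N
    rw [sq]
    linarith
  have hsrw : Real.log (((p:ℝ)^2 + 1)/2) = Real.log (F0aux.Np p) := by rw [hNcast]
  rw [hFeq, hsrw]
  set s₀ := Real.log (F0aux.Np p) / Real.log p with hs₀
  have hp1 : (1:ℝ) < p := by exact_mod_cast (by omega : 1 < p)
  have hN5 : 5 ≤ F0aux.Np p := F0aux.Np_ge p hp3
  have hNR1 : (1:ℝ) < (F0aux.Np p : ℝ) := by exact_mod_cast (by omega : 1 < F0aux.Np p)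
  have hlogp : 0 < Real.log p := Real.log_pos hp1
  have hs₀pos : 0 < s₀ := div_pos (Real.log_pos hNR1) hlogp
  apply le_antisymm
  · apply dimH_le
    intro d' htop
    by_contra hnot
    have hlt : ENNReal.ofReal s₀ < (d' : ℝ≥0∞) := not_le.mp hnot
    have hlt' : s₀ < (d' : ℝ) := by
      rw [← ENNReal.ofReal_coe_nnreal] at hlt
      exact (ENNReal.ofReal_lt_ofReal_iff_of_nonneg hs₀pos.le).mp hlt
    have h0 := F0aux.upper hp3 hpo (d' : ℝ) hlt'
    rw [htop] at h0
    exact ENNReal.top_ne_zero h0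
  · have hne := F0aux.lower hp3 hpo
    have hcoe : ((s₀.toNNReal : ℝ≥0) : ℝ) = s₀ := Real.coe_toNNReal _ hs₀pos.le
    have hle := le_dimH_of_hausdorffMeasure_ne_zero (d := s₀.toNNReal)
      (by rw [hcoe]; exact hne)
    have hofreal : ((s₀.toNNReal : ℝ≥0) : ℝ≥0∞) = ENNReal.ofReal s₀ := rfl
    rwa [hofreal] at hle
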